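/- arXiv:1407.5155 — 2 statements merged into one kernel-verified Lean document; each statement's English description precedes it below -/
import Mathlib

section
/- Let δ̲ < 1 and let D, D' ∈ ℝ^{m×p} satisfy max(δ̲_k(D), δ̲_k(D')) ≤ δ̲. Then for every index set J of size k: (i) |||I − D_J⁺ D'_J|||₂ ≤ (1−δ̲)^{-1/2}·‖D − D'‖_F; (ii) |||Θ_J(D') − Θ_J(D)|||₂ ≤ 2(1−δ̲)^{-3/2}·‖D − D'‖_F; (iii) |||(D'_J)⁺ − D_J⁺|||₂ ≤ 2(1−δ̲)^{-1}·‖D − D'‖_F; (iv) |||P_J(D') − P_J(D)|||₂ ≤ 2(1−δ̲)^{-1/2}·‖D − D'‖_F. -/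
open MeasureTheory Matrix Finset
open scoped ENNReal NNReal

noncomputable section

/-- squared ℓ² norm of a vector -/
def l2sq {n : Type*} [Fintype n] (v : n → ℝ) : ℝ := ∑ i, v i ^ 2

/-- ℓ² norm of a vector -/
def l2 {n : Type*} [Fintype n] (v : n → ℝ) : ℝ := Real.sqrt (l2sq v)

/-- ℓ¹ norm of a vector -/
def l1 {n : Type*} [Fintype n] (v : n → ℝ) : ℝ := ∑ i, |v i|

/-- ℓ^∞ (sup) norm of a vector -/
def linf {n : Type*} (v : n → ℝ) : ℝ := sSup (Set.range fun i => |v i|)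

/-- squared Frobenius norm -/
def frobSq {n q : Type*} [Fintype n] [Fintype q] (A : Matrix n q ℝ) : ℝ :=
  ∑ i, ∑ j, A i j ^ 2

/-- Frobenius norm -/
def frob {n q : Type*} [Fintype n] [Fintype q] (A : Matrix n q ℝ) : ℝ :=
  Real.sqrt (frobSq A)

/-- spectral (operator ℓ²→ℓ²) norm -/
def spec {n q : Type*} [Fintype n] [Fintype q] (A : Matrix n q ℝ) : ℝ :=
  sSup {t : ℝ | ∃ x : q → ℝ, l2 x ≤ 1 ∧ t = l2 (A.mulVec x)}

/-- operator ℓ∞→ℓ∞ norm: max row sum of absolute values -/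
def opInf {n q : Type*} [Fintype q] (A : Matrix n q ℝ) : ℝ :=
  sSup (Set.range fun i => ∑ j, |A i j|)

/-- j-th column of a matrix -/
def col {m p : ℕ} (D : Matrix (Fin m) (Fin p) ℝ) (j : Fin p) : Fin m → ℝ :=
  fun i => D i j

/-- the oblique manifold: matrices with unit ℓ²-norm columns -/
def Oblique {m p : ℕ} (D : Matrix (Fin m) (Fin p) ℝ) : Prop :=
  ∀ j, l2sq (_root_.col D j) = 1

/-- cumulative coherence μ_k -/
def mu {m p : ℕ} (k : ℕ) (D : Matrix (Fin m) (Fin p) ℝ) : ℝ :=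
  sSup {t : ℝ | ∃ J : Finset (Fin p), J.card ≤ k ∧ ∃ j, j ∉ J ∧
    t = ∑ i ∈ J, |∑ r, D r i * D r j|}

/-- lower restricted isometry constant δ̲_k -/
def deltaLow {m p : ℕ} (k : ℕ) (D : Matrix (Fin m) (Fin p) ℝ) : ℝ :=
  sInf {δ : ℝ | 0 ≤ δ ∧ ∀ J : Finset (Fin p), J.card = k →
    ∀ z : Fin p → ℝ, (∀ i, i ∉ J → z i = 0) →
      (1 - δ) * l2sq z ≤ l2sq (D.mulVec z)}

/-- upper restricted isometry constant δ̄_k -/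
def deltaUp {m p : ℕ} (k : ℕ) (D : Matrix (Fin m) (Fin p) ℝ) : ℝ :=
  sInf {δ : ℝ | 0 ≤ δ ∧ ∀ J : Finset (Fin p), J.card = k →
    ∀ z : Fin p → ℝ, (∀ i, i ∉ J → z i = 0) →
      l2sq (D.mulVec z) ≤ (1 + δ) * l2sq z}

/-- submatrix D_J of the columns indexed by J -/
def colsub {m p : ℕ} (D : Matrix (Fin m) (Fin p) ℝ) (J : Finset (Fin p)) :
    Matrix (Fin m) J ℝ := fun i j => D i j.1

/-- Gram matrix D_Jᵀ D_J -/
def gram {m p : ℕ} (D : Matrix (Fin m) (Fin p) ℝ) (J : Finset (Fin p)) :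
    Matrix J J ℝ := (colsub D J)ᵀ * colsub D J

/-- Θ_J(D) = (D_Jᵀ D_J)⁻¹ -/
def theta {m p : ℕ} (D : Matrix (Fin m) (Fin p) ℝ) (J : Finset (Fin p)) :
    Matrix J J ℝ := (gram D J)⁻¹

/-- pseudo-inverse D_J⁺ = Θ_J D_Jᵀ -/
def pinv {m p : ℕ} (D : Matrix (Fin m) (Fin p) ℝ) (J : Finset (Fin p)) :
    Matrix J (Fin m) ℝ := theta D J * (colsub D J)ᵀ

/-- orthogonal projector P_J(D) = D_J Θ_J D_Jᵀ -/
def proj {m p : ℕ} (D : Matrix (Fin m) (Fin p) ℝ) (J : Finset (Fin p)) :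
    Matrix (Fin m) (Fin m) ℝ := colsub D J * pinv D J

/-- Lasso objective L_x(D, α) -/
def lasso {m p : ℕ} (lam : ℝ) (x : Fin m → ℝ) (D : Matrix (Fin m) (Fin p) ℝ)
    (a : Fin p → ℝ) : ℝ :=
  (1/2) * l2sq (fun i => x i - D.mulVec a i) + lam * l1 a

/-- f_x(D) = inf_α L_x(D, α) -/
def fobj {m p : ℕ} (lam : ℝ) (x : Fin m → ℝ) (D : Matrix (Fin m) (Fin p) ℝ) : ℝ :=
  ⨅ a : Fin p → ℝ, lasso lam x D a

/-- φ_x(D|s) for a sign vector s with support J -/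
def phi {m p : ℕ} (lam : ℝ) (x : Fin m → ℝ) (D : Matrix (Fin m) (Fin p) ℝ)
    (J : Finset (Fin p)) (s : Fin p → ℝ) : ℝ :=
  (1/2) * (l2sq x - ∑ a : J, ∑ b : J,
    ((colsub D J)ᵀ.mulVec x a - lam * s a.1) * theta D J a b
      * ((colsub D J)ᵀ.mulVec x b - lam * s b.1))

/-- α̂_x(D|s): the closed-form candidate minimizer with sign pattern s and support J -/
def alphaHat {m p : ℕ} (lam : ℝ) (x : Fin m → ℝ) (D : Matrix (Fin m) (Fin p) ℝ)
    (J : Finset (Fin p)) (s : Fin p → ℝ) : Fin p → ℝ :=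
  fun i => if h : i ∈ J then
    (pinv D J).mulVec x ⟨i, h⟩ - lam * (theta D J).mulVec (fun a => s a.1) ⟨i, h⟩
  else 0

/-- sign vector of a coefficient vector -/
def sgnv {p : ℕ} (a : Fin p → ℝ) : Fin p → ℝ := fun i => Real.sign (a i)

/-- the noisy signal x = D° α° + ε -/
def xsig {m p : ℕ} (Do : Matrix (Fin m) (Fin p) ℝ) (a : Fin p → ℝ) (e : Fin m → ℝ) :
    Fin m → ℝ := fun i => Do.mulVec a i + e i

/-- average over all subsets J ⊆ {1,…,p} of size k -/
def EJ {p : ℕ} (k : ℕ) (f : Finset (Fin p) → ℝ) : ℝ :=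
  ((p.choose k : ℝ))⁻¹ * ∑ S ∈ Finset.powersetCard k (Finset.univ : Finset (Fin p)), f S

/-- the constant C_min -/
def CminV {m p : ℕ} (k : ℕ) (Do : Matrix (Fin m) (Fin p) ℝ) (Ea2 Ea1 : ℝ) : ℝ :=
  24 * (Ea1 / Real.sqrt Ea2) ^ 2 * (spec Do + 1) * ((k : ℝ) / (p : ℝ)) *
    frob (Doᵀ * Do - (1 : Matrix (Fin p) (Fin p) ℝ))

/-- the constant C_max -/
def CmaxV {m p : ℕ} (k : ℕ) (Do : Matrix (Fin m) (Fin p) ℝ) (Ea1 Malpha : ℝ) : ℝ :=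
  (2/7) * (Ea1 / Malpha) * (1 - 2 * mu k Do)

/-- The Basic signal model (Assumption 1 together with the generative mechanism):
J is uniform over size-k supports, α° is supported on J with white coefficients and signs,
and the noise is decorrelated from the coefficients and white.  Conditional expectations given
J are expressed as integrals over the events {J = S}. -/
structure IsBasicModel {m p : ℕ} (k : ℕ) {Ω : Type*} [MeasurableSpace Ω] (μ : Measure Ω)
    (Jv : Ω → Finset (Fin p)) (av : Ω → Fin p → ℝ) (ev : Ω → Fin m → ℝ)
    (Ea2 Ea1 Ee2 : ℝ) : Prop where
  prob : IsProbabilityMeasure μ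
  measJ : ∀ S : Finset (Fin p), MeasurableSet {ω | Jv ω = S}
  measa : ∀ i, Measurable fun ω => av ω i
  mease : ∀ i, Measurable fun ω => ev ω i
  Ea2_pos : 0 < Ea2
  Ea1_pos : 0 < Ea1
  unif : ∀ S : Finset (Fin p), S.card = k →
    μ {ω | Jv ω = S} = ((p.choose k : ℝ≥0∞))⁻¹
  support : ∀ᵐ ω ∂μ, ∀ i, i ∉ Jv ω → av ω i = 0
  coeffWhite : ∀ S : Finset (Fin p), S.card = k → ∀ i ∈ S, ∀ j ∈ S,
    ∫ ω in {ω | Jv ω = S}, av ω i * av ω j ∂μ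
      = (if i = j then Ea2 else 0) * (μ {ω | Jv ω = S}).toReal
  signWhite : ∀ S : Finset (Fin p), S.card = k → ∀ i ∈ S, ∀ j ∈ S,
    ∫ ω in {ω | Jv ω = S}, Real.sign (av ω i) * Real.sign (av ω j) ∂μ
      = (if i = j then 1 else 0) * (μ {ω | Jv ω = S}).toReal
  coeffSign : ∀ S : Finset (Fin p), S.card = k → ∀ i ∈ S, ∀ j ∈ S,
    ∫ ω in {ω | Jv ω = S}, av ω i * Real.sign (av ω j) ∂μ
      = (if i = j then Ea1 else 0) * (μ {ω | Jv ω = S}).toReal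
  noiseCoeff : ∀ S : Finset (Fin p), S.card = k → ∀ i : Fin m, ∀ j ∈ S,
    ∫ ω in {ω | Jv ω = S}, ev ω i * av ω j ∂μ = 0
  noiseSign : ∀ S : Finset (Fin p), S.card = k → ∀ i : Fin m, ∀ j ∈ S,
    ∫ ω in {ω | Jv ω = S}, ev ω i * Real.sign (av ω j) ∂μ = 0
  noiseWhite : ∀ S : Finset (Fin p), S.card = k → ∀ i j : Fin m,
    ∫ ω in {ω | Jv ω = S}, ev ω i * ev ω j ∂μ
      = (if i = j then Ee2 else 0) * (μ {ω | Jv ω = S}).toReal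

/-- The Bounded signal model (Assumption 2): almost sure lower bound on nonzero coefficients,
and almost sure ℓ² bounds on the coefficient vector and the noise. -/
structure IsBoundedModel {m p : ℕ} {Ω : Type*} [MeasurableSpace Ω] (μ : Measure Ω)
    (Jv : Ω → Finset (Fin p)) (av : Ω → Fin p → ℝ) (ev : Ω → Fin m → ℝ)
    (alphaMin Malpha Meps : ℝ) : Prop where
  alphaMin_pos : 0 < alphaMin
  Malpha_pos : 0 < Malpha
  coeffFloor : ∀ᵐ ω ∂μ, ∀ i ∈ Jv ω, alphaMin ≤ |av ω i|
  coeffBound : ∀ᵐ ω ∂μ, l2 (av ω) ≤ Malpha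
  noiseBound : ∀ᵐ ω ∂μ, l2 (ev ω) ≤ Meps

end
section Stmt6Aux
open Matrix

variable {n q r : Type*} [Fintype n] [Fintype q] [Fintype r]

lemma l2sq_nonneg' (v : n → ℝ) : 0 ≤ l2sq v :=
  Finset.sum_nonneg fun _ _ => sq_nonneg _

lemma l2_nonneg' (v : n → ℝ) : 0 ≤ l2 v := Real.sqrt_nonneg _

lemma l2_sq' (v : n → ℝ) : l2 v ^ 2 = l2sq v := Real.sq_sqrt (l2sq_nonneg' v)

lemma l2sq_eq_dot (v : n → ℝ) : l2sq v = v ⬝ᵥ v := by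
  simp [l2sq, dotProduct, sq]

lemma l2_eq_norm (v : n → ℝ) : l2 v = ‖(WithLp.equiv 2 (n → ℝ)).symm v‖ := by
  rw [EuclideanSpace.norm_eq]
  simp only [l2, l2sq, WithLp.equiv_symm_apply, WithLp.ofLp_toLp, Real.norm_eq_abs, sq_abs]

lemma l2_zero' : l2 (0 : n → ℝ) = 0 := by simp [l2, l2sq]

lemma l2_eq_zero {v : n → ℝ} (h : l2 v = 0) : v = 0 := by
  rw [l2_eq_norm] at h
  have h2 : (WithLp.equiv 2 (n → ℝ)).symm v = 0 := norm_eq_zero.mp h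
  funext i
  have := congrFun (congrArg WithLp.ofLp h2) i
  simpa [WithLp.equiv_symm_apply] using this

lemma l2_add_le (u v : n → ℝ) : l2 (u + v) ≤ l2 u + l2 v := by
  rw [l2_eq_norm, l2_eq_norm, l2_eq_norm]
  exact norm_add_le _ _

lemma l2_sub_le (u v : n → ℝ) : l2 (u - v) ≤ l2 u + l2 v := by
  rw [l2_eq_norm, l2_eq_norm, l2_eq_norm]
  exact norm_sub_le _ _

lemma l2_neg' (v : n → ℝ) : l2 (-v) = l2 v := by
  rw [l2_eq_norm, l2_eq_norm]; exact norm_neg _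

lemma l2_smul' (c : ℝ) (v : n → ℝ) : l2 (c • v) = |c| * l2 v := by
  rw [l2_eq_norm, l2_eq_norm]
  have : (WithLp.equiv 2 (n → ℝ)).symm (c • v) = c • (WithLp.equiv 2 (n → ℝ)).symm v := rfl
  rw [this, norm_smul, Real.norm_eq_abs]

lemma dot_le_l2 (v w : n → ℝ) : v ⬝ᵥ w ≤ l2 v * l2 w := by
  rw [l2_eq_norm, l2_eq_norm]
  have := real_inner_le_norm ((WithLp.equiv 2 (n → ℝ)).symm v) ((WithLp.equiv 2 (n → ℝ)).symm w)
  simpa [PiLp.inner_apply, RCLike.inner_apply, dotProduct, WithLp.equiv_symm_apply, mul_comm] using this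

lemma l2sq_pos {v : n → ℝ} (hv : v ≠ 0) : 0 < l2sq v := by
  rcases lt_or_eq_of_le (l2sq_nonneg' v) with h | h
  · exact h
  · exfalso; apply hv
    apply l2_eq_zero
    rw [l2, ← h, Real.sqrt_zero]

lemma frobSq_nonneg' (A : Matrix n q ℝ) : 0 ≤ frobSq A :=
  Finset.sum_nonneg fun _ _ => Finset.sum_nonneg fun _ _ => sq_nonneg _

lemma frob_nonneg' (A : Matrix n q ℝ) : 0 ≤ frob A := Real.sqrt_nonneg _

lemma l2_mulVec_le_frob (A : Matrix n q ℝ) (x : q → ℝ) :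
    l2 (A.mulVec x) ≤ frob A * l2 x := by
  have h1 : l2sq (A.mulVec x) ≤ frobSq A * l2sq x := by
    unfold l2sq frobSq Matrix.mulVec dotProduct
    rw [Finset.sum_mul]
    refine Finset.sum_le_sum fun i _ => ?_
    exact Finset.sum_mul_sq_le_sq_mul_sq _ _ _
  have := Real.sqrt_le_sqrt h1
  rw [Real.sqrt_mul (frobSq_nonneg' A)] at this
  exact this

-- spec basics
lemma zero_mem_specSet (A : Matrix n q ℝ) :
    (0 : ℝ) ∈ {t : ℝ | ∃ x : q → ℝ, l2 x ≤ 1 ∧ t = l2 (A.mulVec x)} := by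
  exact ⟨0, by rw [l2_zero']; norm_num, by rw [Matrix.mulVec_zero, l2_zero']⟩

lemma bddAbove_specSet (A : Matrix n q ℝ) :
    BddAbove {t : ℝ | ∃ x : q → ℝ, l2 x ≤ 1 ∧ t = l2 (A.mulVec x)} := by
  refine ⟨frob A, fun t ht => ?_⟩
  obtain ⟨x, hx, rfl⟩ := ht
  calc l2 (A.mulVec x) ≤ frob A * l2 x := l2_mulVec_le_frob A x
    _ ≤ frob A * 1 := mul_le_mul_of_nonneg_left hx (frob_nonneg' A)
    _ = frob A := mul_one _

lemma spec_nonneg' (A : Matrix n q ℝ) : 0 ≤ spec A :=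
  le_csSup (bddAbove_specSet A) (zero_mem_specSet A)

lemma spec_le_of_mb {A : Matrix n q ℝ} {C : ℝ} (hC : 0 ≤ C)
    (h : ∀ x, l2 (A.mulVec x) ≤ C * l2 x) : spec A ≤ C := by
  apply csSup_le ⟨0, zero_mem_specSet A⟩
  rintro t ⟨x, hx, rfl⟩
  calc l2 (A.mulVec x) ≤ C * l2 x := h x
    _ ≤ C * 1 := mul_le_mul_of_nonneg_left hx hC
    _ = C := mul_one _

lemma mb_mul {A : Matrix n q ℝ} {B : Matrix q r ℝ} {a b : ℝ} (ha : 0 ≤ a)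
    (hA : ∀ x, l2 (A.mulVec x) ≤ a * l2 x) (hB : ∀ x, l2 (B.mulVec x) ≤ b * l2 x) :
    ∀ x, l2 ((A * B).mulVec x) ≤ (a * b) * l2 x := by
  intro x
  rw [← Matrix.mulVec_mulVec]
  calc l2 (A.mulVec (B.mulVec x)) ≤ a * l2 (B.mulVec x) := hA _
    _ ≤ a * (b * l2 x) := mul_le_mul_of_nonneg_left (hB x) ha
    _ = (a * b) * l2 x := by ring

lemma mb_frob (A : Matrix n q ℝ) : ∀ x, l2 (A.mulVec x) ≤ frob A * l2 x :=
  l2_mulVec_le_frob A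

lemma spec_sub_le_of_mb {A B : Matrix n q ℝ} {a b : ℝ} (ha : 0 ≤ a) (hb : 0 ≤ b)
    (hA : ∀ x, l2 (A.mulVec x) ≤ a * l2 x) (hB : ∀ x, l2 (B.mulVec x) ≤ b * l2 x) :
    spec (A - B) ≤ a + b := by
  apply spec_le_of_mb (by linarith)
  intro x
  rw [Matrix.sub_mulVec]
  calc l2 (A.mulVec x - B.mulVec x) ≤ l2 (A.mulVec x) + l2 (B.mulVec x) := l2_sub_le _ _
    _ ≤ a * l2 x + b * l2 x := add_le_add (hA x) (hB x)
    _ = (a + b) * l2 x := by ring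

end Stmt6Aux

section Stmt6Aux2
open Matrix

variable {n q : Type*} [Fintype n] [Fintype q]

lemma rip_of_deltaLow {m p k : ℕ} {D : Matrix (Fin m) (Fin p) ℝ} {δ : ℝ}
    (h : deltaLow k D ≤ δ) (J : Finset (Fin p)) (hJ : J.card = k)
    (z : Fin p → ℝ) (hz : ∀ i, i ∉ J → z i = 0) :
    (1 - δ) * l2sq z ≤ l2sq (D.mulVec z) := by
  by_contra hcon
  push_neg at hcon
  set S := {d : ℝ | 0 ≤ d ∧ ∀ J : Finset (Fin p), J.card = k →
    ∀ z : Fin p → ℝ, (∀ i, i ∉ J → z i = 0) →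
      (1 - d) * l2sq z ≤ l2sq (D.mulVec z)} with hS
  have hzpos : 0 < l2sq z := by
    rcases lt_or_eq_of_le (l2sq_nonneg' z) with h' | h'
    · exact h'
    · exfalso
      have hz0 : z = 0 := by
        apply l2_eq_zero; rw [l2, ← h', Real.sqrt_zero]
      rw [hz0] at hcon
      simp [Matrix.mulVec_zero, l2sq] at hcon
  set ε : ℝ := ((1 - δ) * l2sq z - l2sq (D.mulVec z)) / l2sq z with hε
  have hεpos : 0 < ε := div_pos (by linarith) hzpos
  have hkey : ∀ d ∈ S, δ + ε ≤ d := by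
    intro d hd
    have h1 : (1 - d) * l2sq z ≤ l2sq (D.mulVec z) := hd.2 J hJ z hz
    have h2 : l2sq (D.mulVec z) = (1 - δ - ε) * l2sq z := by
      rw [hε]; field_simp; ring
    rw [h2] at h1
    nlinarith
  have hne : S.Nonempty := ⟨max 1 δ, le_trans zero_le_one (le_max_left _ _), by
    intro J' hJ' z' hz'
    have : (1 : ℝ) - max 1 δ ≤ 0 := by
      have := le_max_left (1:ℝ) δ; linarith
    calc (1 - max 1 δ) * l2sq z' ≤ 0 := mul_nonpos_of_nonpos_of_nonneg this (l2sq_nonneg' z')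
      _ ≤ _ := l2sq_nonneg' _⟩
  have : δ + ε ≤ deltaLow k D := le_csInf hne hkey
  linarith [h]

lemma rip_colsub {m p k : ℕ} {D : Matrix (Fin m) (Fin p) ℝ} {δ : ℝ}
    (h : deltaLow k D ≤ δ) (J : Finset (Fin p)) (hJ : J.card = k)
    (y : J → ℝ) :
    (1 - δ) * l2sq y ≤ l2sq ((colsub D J).mulVec y) := by
  classical
  set z : Fin p → ℝ := fun i => if hi : i ∈ J then y ⟨i, hi⟩ else 0 with hzdef
  have hz : ∀ i, i ∉ J → z i = 0 := fun i hi => dif_neg hi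
  have h1 : l2sq z = l2sq y := by
    unfold l2sq
    calc ∑ i, z i ^ 2 = ∑ i ∈ J, z i ^ 2 :=
          (Finset.sum_subset (Finset.subset_univ J)
            (fun i _ hi => by rw [hz i hi]; ring)).symm
      _ = ∑ i : J, z i.1 ^ 2 := (Finset.sum_coe_sort J (fun i => z i ^ 2)).symm
      _ = ∑ i : J, y i ^ 2 := by
          apply Finset.sum_congr rfl
          intro i _
          simp only [hzdef, dif_pos i.2]
  have h2 : D.mulVec z = (colsub D J).mulVec y := by
    funext i
    unfold Matrix.mulVec dotProduct colsub
    rw [← Finset.sum_subset (Finset.subset_univ J) (fun j _ hj => by rw [hz j hj]; ring)]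
    rw [← Finset.sum_coe_sort J (fun j => D i j * z j)]
    apply Finset.sum_congr rfl
    intro j _
    simp only [hzdef, dif_pos j.2]
  have := rip_of_deltaLow h J hJ z hz
  rw [h1, h2] at this
  exact this

-- dot product facts
lemma dot_gram (A : Matrix n q ℝ) (z w : q → ℝ) :
    z ⬝ᵥ ((Aᵀ * A).mulVec w) = (A.mulVec z) ⬝ᵥ (A.mulVec w) := by
  rw [← Matrix.mulVec_mulVec, Matrix.dotProduct_mulVec, Matrix.vecMul_transpose]

lemma l2sq_mulVec_eq_dot (A : Matrix n q ℝ) (z : q → ℝ) :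
    l2sq (A.mulVec z) = z ⬝ᵥ ((Aᵀ * A).mulVec z) := by
  rw [dot_gram, l2sq_eq_dot]

end Stmt6Aux2

section Stmt6Aux3
open Matrix

variable {n q : Type*} [Fintype n] [Fintype q] [DecidableEq q]

omit [DecidableEq q] in
lemma gram_posdef {c : ℝ} (hc : 0 < c) (A : Matrix n q ℝ)
    (hA : ∀ z : q → ℝ, c * l2sq z ≤ l2sq (A.mulVec z)) :
    (Aᵀ * A).PosDef := by
  rw [Matrix.posDef_iff_dotProduct_mulVec]
  constructor
  · have := Matrix.isHermitian_conjTranspose_mul_self A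
    simpa using this
  · intro x hx
    have h1 : star x = x := by funext i; simp
    rw [h1, ← l2sq_mulVec_eq_dot]
    calc (0:ℝ) < c * l2sq x := mul_pos hc (l2sq_pos hx)
      _ ≤ l2sq (A.mulVec x) := hA x

lemma gram_inv_mul {c : ℝ} (hc : 0 < c) (A : Matrix n q ℝ)
    (hA : ∀ z : q → ℝ, c * l2sq z ≤ l2sq (A.mulVec z)) :
    (Aᵀ * A)⁻¹ * (Aᵀ * A) = 1 ∧ (Aᵀ * A) * (Aᵀ * A)⁻¹ = 1 := by
  have hu : IsUnit (Aᵀ * A).det :=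
    (Matrix.isUnit_iff_isUnit_det _).mp (gram_posdef hc A hA).isUnit
  exact ⟨Matrix.nonsing_inv_mul _ hu, Matrix.mul_nonsing_inv _ hu⟩

/-- bound `‖Θ y‖ ≤ c⁻¹ ‖y‖` -/
lemma mb_theta {c : ℝ} (hc : 0 < c) (A : Matrix n q ℝ)
    (hA : ∀ z : q → ℝ, c * l2sq z ≤ l2sq (A.mulVec z))
    (hGΘ : (Aᵀ * A) * (Aᵀ * A)⁻¹ = 1) :
    ∀ y, l2 ((Aᵀ * A)⁻¹.mulVec y) ≤ c⁻¹ * l2 y := by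
  intro y
  set z := (Aᵀ * A)⁻¹.mulVec y with hzdef
  have hGz : (Aᵀ * A).mulVec z = y := by
    rw [hzdef, Matrix.mulVec_mulVec, hGΘ, Matrix.one_mulVec]
  have h1 : c * l2sq z ≤ l2 z * l2 y := by
    calc c * l2sq z ≤ l2sq (A.mulVec z) := hA z
      _ = z ⬝ᵥ ((Aᵀ * A).mulVec z) := l2sq_mulVec_eq_dot A z
      _ = z ⬝ᵥ y := by rw [hGz]
      _ ≤ l2 z * l2 y := dot_le_l2 z y
  rw [← l2_sq'] at h1
  rcases eq_or_lt_of_le (l2_nonneg' z) with h0 | h0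
  · rw [← h0]; exact mul_nonneg (by positivity) (l2_nonneg' y)
  · have h2 : c * l2 z ≤ l2 y := by nlinarith
    calc l2 z = c⁻¹ * (c * l2 z) := by field_simp
      _ ≤ c⁻¹ * l2 y := mul_le_mul_of_nonneg_left h2 (by positivity)

/-- bound `‖Θ Aᵀ y‖ ≤ (√c)⁻¹ ‖y‖` (pseudo-inverse bound) -/
lemma mb_pinv {c : ℝ} (hc : 0 < c) (A : Matrix n q ℝ)
    (hA : ∀ z : q → ℝ, c * l2sq z ≤ l2sq (A.mulVec z))
    (hGΘ : (Aᵀ * A) * (Aᵀ * A)⁻¹ = 1) :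
    ∀ y, l2 (((Aᵀ * A)⁻¹ * Aᵀ).mulVec y) ≤ (Real.sqrt c)⁻¹ * l2 y := by
  intro y
  rw [← Matrix.mulVec_mulVec]
  set z := (Aᵀ * A)⁻¹.mulVec (Aᵀ.mulVec y) with hzdef
  have hGz : (Aᵀ * A).mulVec z = Aᵀ.mulVec y := by
    rw [hzdef, Matrix.mulVec_mulVec, hGΘ, Matrix.one_mulVec]
  have hAz : l2sq (A.mulVec z) ≤ l2 (A.mulVec z) * l2 y := by
    calc l2sq (A.mulVec z) = z ⬝ᵥ ((Aᵀ * A).mulVec z) := l2sq_mulVec_eq_dot A z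
      _ = z ⬝ᵥ (Aᵀ.mulVec y) := by rw [hGz]
      _ = (A.mulVec z) ⬝ᵥ y := by
          rw [Matrix.dotProduct_mulVec, Matrix.vecMul_transpose]
      _ ≤ l2 (A.mulVec z) * l2 y := dot_le_l2 _ _
  have hAz2 : l2 (A.mulVec z) ≤ l2 y := by
    rw [← l2_sq'] at hAz
    rcases eq_or_lt_of_le (l2_nonneg' (A.mulVec z)) with h0 | h0
    · rw [← h0]; exact l2_nonneg' y
    · nlinarith
  have h1 : c * l2sq z ≤ (l2 y) ^ 2 := by
    calc c * l2sq z ≤ l2sq (A.mulVec z) := hA z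
      _ = l2 (A.mulVec z) ^ 2 := (l2_sq' _).symm
      _ ≤ (l2 y) ^ 2 := by nlinarith [l2_nonneg' (A.mulVec z)]
  have h2 : l2sq z ≤ c⁻¹ * (l2 y) ^ 2 := by
    rw [le_inv_mul_iff₀ hc]; linarith
  calc l2 z = Real.sqrt (l2sq z) := rfl
    _ ≤ Real.sqrt (c⁻¹ * (l2 y) ^ 2) := Real.sqrt_le_sqrt h2
    _ = (Real.sqrt c)⁻¹ * l2 y := by
        rw [Real.sqrt_mul (by positivity), Real.sqrt_sq (l2_nonneg' y), Real.sqrt_inv]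

/-- bound `‖A Θ y‖ ≤ (√c)⁻¹ ‖y‖` -/
lemma mb_pinvT {c : ℝ} (hc : 0 < c) (A : Matrix n q ℝ)
    (hA : ∀ z : q → ℝ, c * l2sq z ≤ l2sq (A.mulVec z))
    (hGΘ : (Aᵀ * A) * (Aᵀ * A)⁻¹ = 1) :
    ∀ y, l2 ((A * (Aᵀ * A)⁻¹).mulVec y) ≤ (Real.sqrt c)⁻¹ * l2 y := by
  intro y
  rw [← Matrix.mulVec_mulVec]
  set w := (Aᵀ * A)⁻¹.mulVec y with hwdef
  have hGw : (Aᵀ * A).mulVec w = y := by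
    rw [hwdef, Matrix.mulVec_mulVec, hGΘ, Matrix.one_mulVec]
  have h1 : l2sq (A.mulVec w) ≤ c⁻¹ * (l2 y) ^ 2 := by
    calc l2sq (A.mulVec w) = w ⬝ᵥ ((Aᵀ * A).mulVec w) := l2sq_mulVec_eq_dot A w
      _ = w ⬝ᵥ y := by rw [hGw]
      _ ≤ l2 w * l2 y := dot_le_l2 _ _
      _ ≤ (c⁻¹ * l2 y) * l2 y :=
          mul_le_mul_of_nonneg_right (mb_theta hc A hA hGΘ y) (l2_nonneg' y)
      _ = c⁻¹ * (l2 y) ^ 2 := by ring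
  calc l2 (A.mulVec w) = Real.sqrt (l2sq (A.mulVec w)) := rfl
    _ ≤ Real.sqrt (c⁻¹ * (l2 y) ^ 2) := Real.sqrt_le_sqrt h1
    _ = (Real.sqrt c)⁻¹ * l2 y := by
        rw [Real.sqrt_mul (by positivity), Real.sqrt_sq (l2_nonneg' y), Real.sqrt_inv]

/-- bound `‖(1 - A Θ Aᵀ) y‖ ≤ ‖y‖` -/
lemma mb_projc [DecidableEq n] {c : ℝ} (hc : 0 < c) (A : Matrix n q ℝ)
    (hA : ∀ z : q → ℝ, c * l2sq z ≤ l2sq (A.mulVec z))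
    (hGΘ : (Aᵀ * A) * (Aᵀ * A)⁻¹ = 1) :
    ∀ y, l2 ((1 - A * ((Aᵀ * A)⁻¹ * Aᵀ)).mulVec y) ≤ 1 * l2 y := by
  intro y
  set t := ((Aᵀ * A)⁻¹ * Aᵀ).mulVec y with htdef
  set u := A.mulVec t with hudef
  have hmv : (1 - A * ((Aᵀ * A)⁻¹ * Aᵀ)).mulVec y = y - u := by
    rw [Matrix.sub_mulVec, Matrix.one_mulVec, hudef, htdef,
      Matrix.mulVec_mulVec]
  have hGt : (Aᵀ * A).mulVec t = Aᵀ.mulVec y := by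
    rw [htdef, Matrix.mulVec_mulVec, ← Matrix.mul_assoc, hGΘ, Matrix.one_mul]
  have huu : u ⬝ᵥ u = u ⬝ᵥ y := by
    calc u ⬝ᵥ u = l2sq (A.mulVec t) := by rw [hudef, l2sq_eq_dot]
      _ = t ⬝ᵥ ((Aᵀ * A).mulVec t) := l2sq_mulVec_eq_dot A t
      _ = t ⬝ᵥ (Aᵀ.mulVec y) := by rw [hGt]
      _ = (A.mulVec t) ⬝ᵥ y := by rw [Matrix.dotProduct_mulVec, Matrix.vecMul_transpose]
      _ = u ⬝ᵥ y := by rw [hudef]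
  have hsq : l2sq (y - u) ≤ l2sq y := by
    have e1 : l2sq (y - u) = y ⬝ᵥ y - 2 * (u ⬝ᵥ y) + u ⬝ᵥ u := by
      rw [l2sq_eq_dot]
      simp only [sub_dotProduct, dotProduct_sub]
      rw [dotProduct_comm y u]
      ring
    have e2 : l2sq (y - u) = l2sq y - u ⬝ᵥ u := by
      rw [e1, huu, l2sq_eq_dot]; ring
    have : (0:ℝ) ≤ u ⬝ᵥ u := by rw [← l2sq_eq_dot]; exact l2sq_nonneg' u
    linarith
  rw [hmv, one_mul]
  exact Real.sqrt_le_sqrt hsq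

end Stmt6Aux3

section Stmt6Aux4
open Matrix

variable {n q r : Type*} [Fintype n] [Fintype q] [Fintype r] [DecidableEq q]

lemma chain_cancel {A : Matrix n q ℝ} {Θ : Matrix q q ℝ}
    (h : Θ * (Aᵀ * A) = 1) (M : Matrix q r ℝ) :
    Θ * (Aᵀ * (A * M)) = M := by
  rw [← Matrix.mul_assoc Aᵀ A M, ← Matrix.mul_assoc Θ (Aᵀ * A) M, h, Matrix.one_mul]

lemma chain_cancel' {A : Matrix n q ℝ} {Θ : Matrix q q ℝ}
    (h : Aᵀ * A * Θ = 1) (M : Matrix q r ℝ) :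
    Aᵀ * (A * (Θ * M)) = M := by
  rw [← Matrix.mul_assoc A Θ M, ← Matrix.mul_assoc Aᵀ (A * Θ) M,
    ← Matrix.mul_assoc Aᵀ A Θ, h, Matrix.one_mul]

omit [DecidableEq q] in
lemma frobSq_transpose' (A : Matrix n q ℝ) : frobSq Aᵀ = frobSq A := by
  simp only [frobSq, Matrix.transpose_apply]
  exact Finset.sum_comm

omit [DecidableEq q] in
lemma frob_transpose' (A : Matrix n q ℝ) : frob Aᵀ = frob A := by
  rw [frob, frob, frobSq_transpose']

omit [DecidableEq q] in
lemma frobSq_colsub_le {m p : ℕ} (M : Matrix (Fin m) (Fin p) ℝ) (J : Finset (Fin p)) :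
    frobSq (colsub M J) ≤ frobSq M := by
  unfold frobSq colsub
  apply Finset.sum_le_sum
  intro i _
  calc (∑ j : J, M i j.1 ^ 2) = ∑ j ∈ J, M i j ^ 2 :=
        Finset.sum_coe_sort J (fun j => M i j ^ 2)
    _ ≤ ∑ j, M i j ^ 2 :=
        Finset.sum_le_sum_of_subset_of_nonneg (Finset.subset_univ J)
          (fun _ _ _ => sq_nonneg _)

omit [DecidableEq q] in
lemma frob_colsub_le {m p : ℕ} (M : Matrix (Fin m) (Fin p) ℝ) (J : Finset (Fin p)) :
    frob (colsub M J) ≤ frob M := Real.sqrt_le_sqrt (frobSq_colsub_le M J)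

omit [DecidableEq q] in
lemma spec_add_le_of_mb {A B : Matrix n q ℝ} {a b : ℝ} (ha : 0 ≤ a) (hb : 0 ≤ b)
    (hA : ∀ x, l2 (A.mulVec x) ≤ a * l2 x) (hB : ∀ x, l2 (B.mulVec x) ≤ b * l2 x) :
    spec (A + B) ≤ a + b := by
  apply spec_le_of_mb (by linarith)
  intro x
  rw [Matrix.add_mulVec]
  calc l2 (A.mulVec x + B.mulVec x) ≤ l2 (A.mulVec x) + l2 (B.mulVec x) := l2_add_le _ _
    _ ≤ a * l2 x + b * l2 x := add_le_add (hA x) (hB x)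
    _ = (a + b) * l2 x := by ring

end Stmt6Aux4

/-- Lemma (Lipschitz bounds under RIP): perturbation bounds for I − D_J⁺D'_J, Θ_J, D_J⁺ and P_J. -/
theorem stmt6 {m p k : ℕ} (δ : ℝ) (hδ : δ < 1)
    (D D' : Matrix (Fin m) (Fin p) ℝ)
    (hD : deltaLow k D ≤ δ) (hD' : deltaLow k D' ≤ δ)
    (J : Finset (Fin p)) (hJ : J.card = k) :
    spec ((1 : Matrix J J ℝ) - pinv D J * colsub D' J)
        ≤ frob (D - D') / Real.sqrt (1 - δ) ∧
    spec (theta D' J - theta D J)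
        ≤ 2 * frob (D - D') / ((1 - δ) * Real.sqrt (1 - δ)) ∧
    spec (pinv D' J - pinv D J) ≤ 2 * frob (D - D') / (1 - δ) ∧
    spec (proj D' J - proj D J) ≤ 2 * frob (D - D') / Real.sqrt (1 - δ) := by
  classical
  set c : ℝ := 1 - δ with hcdef
  have hc : 0 < c := by rw [hcdef]; linarith
  set sc : ℝ := Real.sqrt c with hscdef
  have hsc : 0 < sc := Real.sqrt_pos.mpr hc
  have hscc : sc * sc = c := Real.mul_self_sqrt hc.le
  set f : ℝ := frob (D - D') with hfdef
  have hf : 0 ≤ f := frob_nonneg' _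
  set A : Matrix (Fin m) J ℝ := colsub D J with hAdef
  set B : Matrix (Fin m) J ℝ := colsub D' J with hBdef
  have ripA : ∀ z : J → ℝ, c * l2sq z ≤ l2sq (A.mulVec z) := by
    intro z; rw [hcdef]; exact rip_colsub hD J hJ z
  have ripB : ∀ z : J → ℝ, c * l2sq z ≤ l2sq (B.mulVec z) := by
    intro z; rw [hcdef]; exact rip_colsub hD' J hJ z
  obtain ⟨hΘGA, hGΘA⟩ := gram_inv_mul hc A ripA
  obtain ⟨hΘGB, hGΘB⟩ := gram_inv_mul hc B ripB
  set thA : Matrix J J ℝ := (Aᵀ * A)⁻¹ with hthAdef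
  set thB : Matrix J J ℝ := (Bᵀ * B)⁻¹ with hthBdef
  -- rewrite the definitions in the goal
  have ethA : theta D J = thA := rfl
  have ethB : theta D' J = thB := rfl
  have epA : pinv D J = thA * Aᵀ := rfl
  have epB : pinv D' J = thB * Bᵀ := rfl
  have eprA : proj D J = A * (thA * Aᵀ) := by
    show colsub D J * pinv D J = _
    rw [epA]
  have eprB : proj D' J = B * (thB * Bᵀ) := by
    show colsub D' J * pinv D' J = _
    rw [epB]
  -- mulVec bounds
  have mbThA : ∀ y, l2 (thA.mulVec y) ≤ c⁻¹ * l2 y := mb_theta hc A ripA hGΘA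
  have mbThB : ∀ y, l2 (thB.mulVec y) ≤ c⁻¹ * l2 y := mb_theta hc B ripB hGΘB
  have mbPA : ∀ y, l2 ((thA * Aᵀ).mulVec y) ≤ sc⁻¹ * l2 y := mb_pinv hc A ripA hGΘA
  have mbPB : ∀ y, l2 ((thB * Bᵀ).mulVec y) ≤ sc⁻¹ * l2 y := mb_pinv hc B ripB hGΘB
  have mbATh : ∀ y, l2 ((A * thA).mulVec y) ≤ sc⁻¹ * l2 y := mb_pinvT hc A ripA hGΘA
  have mbQA : ∀ y, l2 ((1 - A * (thA * Aᵀ)).mulVec y) ≤ 1 * l2 y := mb_projc hc A ripA hGΘA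
  have mbQB : ∀ y, l2 ((1 - B * (thB * Bᵀ)).mulVec y) ≤ 1 * l2 y := mb_projc hc B ripB hGΘB
  have mbE : ∀ x, l2 ((A - B).mulVec x) ≤ f * l2 x := by
    intro x
    have h1 : A - B = colsub (D - D') J := rfl
    calc l2 ((A - B).mulVec x) ≤ frob (A - B) * l2 x := l2_mulVec_le_frob _ _
      _ ≤ f * l2 x := by
          apply mul_le_mul_of_nonneg_right _ (l2_nonneg' x)
          rw [h1, hfdef]; exact frob_colsub_le _ _
  have mbET : ∀ x, l2 ((A - B)ᵀ.mulVec x) ≤ f * l2 x := by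
    intro x
    calc l2 ((A - B)ᵀ.mulVec x) ≤ frob (A - B)ᵀ * l2 x := l2_mulVec_le_frob _ _
      _ ≤ f * l2 x := by
          apply mul_le_mul_of_nonneg_right _ (l2_nonneg' x)
          rw [frob_transpose']
          rw [show A - B = colsub (D - D') J from rfl, hfdef]
          exact frob_colsub_le _ _
  have mbE' : ∀ x, l2 ((B - A).mulVec x) ≤ f * l2 x := by
    intro x
    rw [show B - A = -(A - B) from (neg_sub A B).symm, Matrix.neg_mulVec, l2_neg']
    exact mbE x
  have hscinv : (0:ℝ) ≤ sc⁻¹ := by positivity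
  have hcinv : (0:ℝ) ≤ c⁻¹ := by positivity
  refine ⟨?_, ?_, ?_, ?_⟩
  · -- (i)
    have id1 : (1 : Matrix J J ℝ) - pinv D J * B = thA * Aᵀ * (A - B) := by
      rw [epA, Matrix.mul_sub]
      have h1 : thA * Aᵀ * A = 1 := by rw [Matrix.mul_assoc]; exact hΘGA
      rw [h1]
    rw [id1]
    calc spec (thA * Aᵀ * (A - B)) ≤ sc⁻¹ * f := by
          apply spec_le_of_mb (by positivity)
          exact mb_mul hscinv mbPA mbE
      _ = f / sc := (div_eq_inv_mul f sc).symm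
  · -- (ii)
    have id2 : theta D' J - theta D J
        = thB * (A - B)ᵀ * (A * thA) + thB * Bᵀ * (A - B) * thA := by
      rw [ethA, ethB, Matrix.transpose_sub]
      have rA1 : Aᵀ * (A * thA) = 1 := by rw [← Matrix.mul_assoc]; exact hGΘA
      simp only [Matrix.sub_mul, Matrix.mul_sub, Matrix.mul_assoc, rA1,
        Matrix.mul_one, chain_cancel hΘGB]
      abel
    rw [id2]
    calc spec (thB * (A - B)ᵀ * (A * thA) + thB * Bᵀ * (A - B) * thA)
        ≤ (c⁻¹ * f) * sc⁻¹ + (sc⁻¹ * f) * c⁻¹ := by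
          apply spec_add_le_of_mb (by positivity) (by positivity)
          · exact mb_mul (by positivity) (mb_mul hcinv mbThB mbET) mbATh
          · exact mb_mul (by positivity) (mb_mul hscinv mbPB mbE) mbThA
      _ = 2 * f / (c * sc) := by field_simp; ring
  · -- (iii)
    have id3 : pinv D' J - pinv D J
        = thB * Bᵀ * (A - B) * (thA * Aᵀ) - thB * (A - B)ᵀ * (1 - A * (thA * Aᵀ)) := by
      rw [epA, epB, Matrix.transpose_sub]
      simp only [Matrix.sub_mul, Matrix.mul_sub, Matrix.mul_assoc, Matrix.mul_one,
        chain_cancel hΘGB, chain_cancel' hGΘA]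
      abel
    rw [id3]
    calc spec (thB * Bᵀ * (A - B) * (thA * Aᵀ) - thB * (A - B)ᵀ * (1 - A * (thA * Aᵀ)))
        ≤ (sc⁻¹ * f) * sc⁻¹ + (c⁻¹ * f) * 1 := by
          apply spec_sub_le_of_mb (by positivity) (by positivity)
          · exact mb_mul (by positivity) (mb_mul hscinv mbPB mbE) mbPA
          · exact mb_mul (by positivity) (mb_mul hcinv mbThB mbET) mbQA
      _ = 2 * f / c := by
          rw [← hscc]; field_simp; ring
  · -- (iv)
    have id4 : proj D' J - proj D J
        = (1 - A * (thA * Aᵀ)) * (B - A) * (thB * Bᵀ)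
          - A * thA * (A - B)ᵀ * (1 - B * (thB * Bᵀ)) := by
      rw [eprA, eprB, Matrix.transpose_sub]
      simp only [Matrix.sub_mul, Matrix.mul_sub, Matrix.mul_assoc, Matrix.mul_one,
        Matrix.one_mul, chain_cancel hΘGA, chain_cancel' hGΘB]
      abel
    rw [id4]
    calc spec ((1 - A * (thA * Aᵀ)) * (B - A) * (thB * Bᵀ)
          - A * thA * (A - B)ᵀ * (1 - B * (thB * Bᵀ)))
        ≤ (1 * f) * sc⁻¹ + (sc⁻¹ * f) * 1 := by
          apply spec_sub_le_of_mb (by positivity) (by positivity)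
          · exact mb_mul (by positivity) (mb_mul zero_le_one mbQA mbE') mbPB
          · exact mb_mul (by positivity) (mb_mul hscinv mbATh mbET) mbQB
      _ = 2 * f / sc := by field_simp; ring
end

section
/- Let D ∈ ℝ^{m×p}, J ⊆ {1,…,p} such that D_JᵀD_J is invertible, s ∈ {−1,1}^J a sign vector supported on J, λ > 0, and x ∈ ℝ^m. If sign(D_J⁺x − λ(D_JᵀD_J)^{-1}s) = s and ‖D_{J^c}ᵀ(I − P_J(D))x‖_∞ + λ·|||D_{J^c}ᵀD_J(D_JᵀD_J)^{-1}|||_∞ < λ, then α̂_x(D|s) is the unique minimizer over ℝ^p of α ↦ ½‖x − Dα‖₂² + λ‖α‖₁, and sign(α̂_x(D|s)_J) = s. -/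
open MeasureTheory Matrix Finset
open scoped ENNReal NNReal

lemma myl2sq_nonneg {n : Type*} [Fintype n] (v : n → ℝ) : 0 ≤ l2sq v :=
  Finset.sum_nonneg fun _ _ => sq_nonneg _

lemma myl2sq_zero {n : Type*} [Fintype n] {v : n → ℝ} (h : l2sq v = 0) : ∀ i, v i = 0 := by
  intro i
  have h2 := (Finset.sum_eq_zero_iff_of_nonneg (fun i _ => sq_nonneg (v i))).mp h i
    (Finset.mem_univ i)
  exact (pow_eq_zero_iff two_ne_zero).mp h2

lemma myabs_sign {v sv : ℝ} (h : Real.sign v = sv) (hs : sv = 1 ∨ sv = -1) : |v| = sv * v := by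
  rcases lt_trichotomy v 0 with hv | hv | hv
  · rw [Real.sign_of_neg hv] at h
    rcases hs with h1 | h1
    · rw [h1] at h; norm_num at h
    · rw [h1, abs_of_neg hv]; ring
  · rw [hv, Real.sign_zero] at h
    rcases hs with h1 | h1 <;> rw [h1] at h <;> norm_num at h
  · rw [Real.sign_of_pos hv] at h
    rcases hs with h1 | h1
    · rw [h1, abs_of_pos hv]; ring
    · rw [h1] at h; norm_num at h

/-- Lemma (unique Lasso minimizer with prescribed sign): if the candidate α̂_x(D|s) has sign s
on J and the irrepresentability-type condition holds on J^c, then α̂_x(D|s) is the unique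
minimizer of the Lasso and its sign on J is s. -/
theorem stmt11 {m p : ℕ} (D : Matrix (Fin m) (Fin p) ℝ) (J : Finset (Fin p))
    (hinv : IsUnit (gram D J)) (s : Fin p → ℝ)
    (hs1 : ∀ i ∈ J, s i = 1 ∨ s i = -1) (hs0 : ∀ i, i ∉ J → s i = 0)
    (lam : ℝ) (hlam : 0 < lam) (x : Fin m → ℝ)
    (hsign : ∀ i ∈ J, Real.sign (alphaHat lam x D J s i) = s i)
    (hirr : linf (fun a : (Jᶜ : Finset (Fin p)) =>
              ∑ r, D r a.1 * (x r - (proj D J).mulVec x r))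
            + lam * opInf ((colsub D (Jᶜ : Finset (Fin p)))ᵀ * colsub D J * theta D J)
          < lam) :
    (∀ a : Fin p → ℝ, a ≠ alphaHat lam x D J s →
      lasso lam x D (alphaHat lam x D J s) < lasso lam x D a) ∧
    (∀ i ∈ J, Real.sign (alphaHat lam x D J s i) = s i) := by
  classical
  refine ⟨?_, hsign⟩
  intro a hne
  set α := alphaHat lam x D J s with hα
  have hdet : IsUnit (gram D J).det := (Matrix.isUnit_iff_isUnit_det _).mp hinv
  have hGT : gram D J * theta D J = 1 := Matrix.mul_nonsing_inv _ hdet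
  have hTG : theta D J * gram D J = 1 := Matrix.nonsing_inv_mul _ hdet
  set sJ : J → ℝ := fun c => s c.1 with hsJ
  set q : J → ℝ := fun c => (∑ i, D i c.1 * x i) - lam * s c.1 with hq
  set w : J → ℝ := fun b => α b.1 with hw
  have hα0 : ∀ j, j ∉ J → α j = 0 := by
    intro j hj; simp [hα, alphaHat, hj]
  have hq' : q = (colsub D J)ᵀ.mulVec x - lam • sJ := by
    funext c
    simp [hq, hsJ, Matrix.mulVec, dotProduct, colsub, Matrix.transpose_apply]
  have hwq : w = (theta D J).mulVec q := by
    funext b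
    have hb : (b : Fin p) ∈ J := b.2
    have h1 : α b.1 = (pinv D J).mulVec x b - lam * (theta D J).mulVec sJ b := by
      simp [hα, alphaHat, hb, hsJ]
    have h2 : (pinv D J).mulVec x = (theta D J).mulVec ((colsub D J)ᵀ.mulVec x) :=
      (Matrix.mulVec_mulVec x (theta D J) (colsub D J)ᵀ).symm
    show α b.1 = _
    rw [h1, h2, hq', Matrix.mulVec_sub, Matrix.mulVec_smul]
    simp [smul_eq_mul]
  have hstat : (gram D J).mulVec w = q := by
    rw [hwq, Matrix.mulVec_mulVec, hGT, Matrix.one_mulVec]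
  set res : Fin m → ℝ := fun i => x i - D.mulVec α i with hres
  set g : Fin p → ℝ := fun j => ∑ i, D i j * res i with hg
  -- D α = colsub J * w
  have hDα : D.mulVec α = (colsub D J).mulVec w := by
    funext i
    show ∑ j, D i j * α j = ∑ b : J, colsub D J i b * w b
    rw [show (∑ b : J, colsub D J i b * w b) = ∑ b ∈ J.attach, D i b.1 * α b.1 from rfl,
      Finset.sum_attach J (fun j => D i j * α j)]
    symm
    apply Finset.sum_subset (Finset.subset_univ J)
    intro j _ hj
    rw [hα0 j hj, mul_zero]
  -- swap lemma
  have hswap : ∀ (v : Fin p → ℝ) (_ : ∀ j, j ∉ J → v j = 0) (c : J),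
      (∑ i, D i c.1 * (colsub D J).mulVec (fun b : J => v b.1) i)
        = (gram D J).mulVec (fun b : J => v b.1) c := by
    intro v _ c
    calc ∑ i, D i c.1 * (colsub D J).mulVec (fun b : J => v b.1) i
        = ∑ i, ∑ b : J, (D i c.1 * D i b.1) * v b.1 := by
          apply Finset.sum_congr rfl; intro i _
          rw [show (colsub D J).mulVec (fun b : J => v b.1) i
              = ∑ b : J, D i b.1 * v b.1 from rfl, Finset.mul_sum]
          apply Finset.sum_congr rfl; intro b _; ring
      _ = ∑ b : J, ∑ i, (D i c.1 * D i b.1) * v b.1 := Finset.sum_comm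
      _ = ∑ b : J, gram D J c b * v b.1 := by
          apply Finset.sum_congr rfl; intro b _
          rw [show gram D J c b = ∑ i, D i c.1 * D i b.1 from by
            simp [_root_.gram, Matrix.mul_apply, colsub, Matrix.transpose_apply]]
          rw [Finset.sum_mul]
      _ = (gram D J).mulVec (fun b : J => v b.1) c := rfl
  -- g on J
  have hgJ : ∀ j (hj : j ∈ J), g j = lam * s j := by
    intro j hj
    have : g j = (∑ i, D i j * x i) - (gram D J).mulVec w ⟨j, hj⟩ := by
      have e1 : g j = (∑ i, D i j * x i) - ∑ i, D i j * D.mulVec α i := by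
        simp only [hg]
        rw [show (∑ i, D i j * res i) = ∑ i, (D i j * x i - D i j * D.mulVec α i) from by
          apply Finset.sum_congr rfl; intro i _; rw [hres]; ring]
        rw [Finset.sum_sub_distrib]
      rw [e1, hDα]
      have := hswap (fun j => α j) hα0 ⟨j, hj⟩
      simp only [hw]
      rw [← this]
    rw [this, hstat]
    simp [hq]
  -- bound on g off J
  set LV := linf (fun a : (Jᶜ : Finset (Fin p)) =>
      ∑ r, D r a.1 * (x r - (proj D J).mulVec x r)) with hLV
  set OV := opInf ((colsub D (Jᶜ : Finset (Fin p)))ᵀ * colsub D J * theta D J) with hOV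
  have hgJc : ∀ j, j ∉ J → |g j| ≤ LV + lam * OV := by
    intro j hj
    have hjc : j ∈ (Jᶜ : Finset (Fin p)) := Finset.mem_compl.mpr hj
    set u : Fin m → ℝ := (colsub D J).mulVec ((theta D J).mulVec sJ) with hu
    have hres2 : res = (fun i => x i - (proj D J).mulVec x i) + lam • u := by
      funext i
      rw [hres, hDα, hwq, hq', Matrix.mulVec_sub, Matrix.mulVec_smul, Matrix.mulVec_sub,
        Matrix.mulVec_smul]
      have hproj : (proj D J).mulVec x
          = (colsub D J).mulVec ((theta D J).mulVec ((colsub D J)ᵀ.mulVec x)) := by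
        have : proj D J = colsub D J * theta D J * (colsub D J)ᵀ := by
          rw [proj, pinv, Matrix.mul_assoc]
        rw [Matrix.mulVec_mulVec, Matrix.mulVec_mulVec, this]
      rw [hproj]
      simp [hu, smul_eq_mul]
      ring
    have hgsplit : g j = (∑ r, D r j * (x r - (proj D J).mulVec x r)) + lam * ∑ i, D i j * u i := by
      simp only [hg, hres2]
      rw [show (∑ i, D i j * ((fun i => x i - (proj D J).mulVec x i) + lam • u) i)
          = ∑ i, (D i j * (x i - (proj D J).mulVec x i) + lam * (D i j * u i)) from by
        apply Finset.sum_congr rfl; intro i _; simp [smul_eq_mul]; ring]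
      rw [Finset.sum_add_distrib, ← Finset.mul_sum]
    -- first piece
    have hA : |∑ r, D r j * (x r - (proj D J).mulVec x r)| ≤ LV := by
      rw [hLV, linf]
      apply le_csSup ((Set.finite_range _).bddAbove)
      exact ⟨⟨j, hjc⟩, rfl⟩
    -- second piece
    have hB : |∑ i, D i j * u i| ≤ OV := by
      set M := (colsub D (Jᶜ : Finset (Fin p)))ᵀ * colsub D J * theta D J with hM
      have e2 : (∑ i, D i j * u i) = ∑ c : J, M ⟨j, hjc⟩ c * sJ c := by
        have : (∑ i, D i j * u i) = M.mulVec sJ ⟨j, hjc⟩ := by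
          rw [hu, Matrix.mulVec_mulVec, hM, Matrix.mul_assoc]
          rw [show ((colsub D (Jᶜ : Finset (Fin p)))ᵀ * (colsub D J * theta D J)).mulVec sJ
              = (colsub D (Jᶜ : Finset (Fin p)))ᵀ.mulVec ((colsub D J * theta D J).mulVec sJ) from
            (Matrix.mulVec_mulVec sJ _ _).symm]
          rfl
        rw [this]; rfl
      rw [e2]
      calc |∑ c : J, M ⟨j, hjc⟩ c * sJ c| ≤ ∑ c : J, |M ⟨j, hjc⟩ c * sJ c| :=
            Finset.abs_sum_le_sum_abs _ _
        _ = ∑ c : J, |M ⟨j, hjc⟩ c| := by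
            apply Finset.sum_congr rfl; intro c _
            rw [abs_mul]
            rcases hs1 c.1 c.2 with h1 | h1 <;> simp [hsJ, h1]
        _ ≤ OV := by
            rw [hOV, opInf]
            apply le_csSup ((Set.finite_range _).bddAbove)
            exact ⟨⟨j, hjc⟩, rfl⟩
    calc |g j| ≤ |∑ r, D r j * (x r - (proj D J).mulVec x r)| + |lam * ∑ i, D i j * u i| := by
          rw [hgsplit]; exact abs_add_le _ _
      _ ≤ LV + lam * OV := by
          rw [abs_mul, abs_of_pos hlam]
          exact add_le_add hA (mul_le_mul_of_nonneg_left hB hlam.le)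
  -- decomposition
  set hv : Fin p → ℝ := fun j => a j - α j with hhv
  set tv : Fin m → ℝ := D.mulVec hv with htv
  have htv' : ∀ i, x i - D.mulVec a i = res i - tv i := by
    intro i
    rw [hres, htv]
    have : D.mulVec hv = D.mulVec a - D.mulVec α := by
      rw [hhv, show (fun j => a j - α j) = a - α from rfl, Matrix.mulVec_sub]
    rw [this]
    simp
  have hT : ∑ i, res i * tv i = ∑ j, g j * hv j := by
    calc ∑ i, res i * tv i = ∑ i, ∑ j, (D i j * res i) * hv j := by
          apply Finset.sum_congr rfl; intro i _
          rw [show tv i = ∑ j, D i j * hv j from rfl, Finset.mul_sum]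
          apply Finset.sum_congr rfl; intro j _; ring
      _ = ∑ j, ∑ i, (D i j * res i) * hv j := Finset.sum_comm
      _ = ∑ j, g j * hv j := by
          apply Finset.sum_congr rfl; intro j _
          rw [hg, Finset.sum_mul]
  have key : lasso lam x D a = lasso lam x D α
      + ((1/2) * l2sq tv + ∑ j, (lam * |a j| - lam * |α j| - g j * hv j)) := by
    have e1 : l2sq (fun i => x i - D.mulVec a i)
        = l2sq res - 2 * (∑ j, g j * hv j) + l2sq tv := by
      rw [← hT]
      calc l2sq (fun i => x i - D.mulVec a i)
          = ∑ i, (res i ^ 2 - 2 * (res i * tv i) + tv i ^ 2) := by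
            rw [l2sq]
            apply Finset.sum_congr rfl; intro i _
            rw [htv' i]; ring
        _ = l2sq res - 2 * (∑ i, res i * tv i) + l2sq tv := by
            rw [Finset.sum_add_distrib, Finset.sum_sub_distrib, ← Finset.mul_sum]
            rfl
    have e2 : ∑ j, (lam * |a j| - lam * |α j| - g j * hv j)
        = lam * l1 a - lam * l1 α - ∑ j, g j * hv j := by
      rw [Finset.sum_sub_distrib, Finset.sum_sub_distrib, ← Finset.mul_sum, ← Finset.mul_sum]
      rfl
    rw [lasso, lasso, e1, e2]
    ring
  -- per-index nonnegativity
  have hterm : ∀ j, 0 ≤ lam * |a j| - lam * |α j| - g j * hv j := by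
    intro j
    by_cases hj : j ∈ J
    · have habs : |α j| = s j * α j := myabs_sign (hsign j hj) (hs1 j hj)
      have hgj := hgJ j hj
      have hsa : s j * a j ≤ |a j| := by
        rcases hs1 j hj with h1 | h1 <;> rw [h1]
        · rw [one_mul]; exact le_abs_self _
        · rw [neg_one_mul]; exact neg_le_abs _
      have hhvj : hv j = a j - α j := rfl
      rw [habs, hgj, hhvj]
      nlinarith [mul_le_mul_of_nonneg_left hsa hlam.le]
    · have h0 : α j = 0 := hα0 j hj
      have hhvj : hv j = a j := by rw [hhv]; simp [h0]
      have hb := hgJc j hj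
      have : g j * a j ≤ (LV + lam * OV) * |a j| := by
        calc g j * a j ≤ |g j * a j| := le_abs_self _
          _ = |g j| * |a j| := abs_mul _ _
          _ ≤ (LV + lam * OV) * |a j| := mul_le_mul_of_nonneg_right hb (abs_nonneg _)
      rw [h0, hhvj]
      have hla : (LV + lam * OV) * |a j| ≤ lam * |a j| :=
        mul_le_mul_of_nonneg_right hirr.le (abs_nonneg _)
      simp only [abs_zero, mul_zero, sub_zero]
      linarith
  have hsum_nonneg : 0 ≤ ∑ j, (lam * |a j| - lam * |α j| - g j * hv j) :=
    Finset.sum_nonneg fun j _ => hterm j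
  have htv_nonneg : 0 ≤ l2sq tv := myl2sq_nonneg tv
  by_cases hcase : ∀ j, j ∉ J → a j = 0
  · -- support inside J: quadratic term strictly positive
    have hhv0 : ∀ j, j ∉ J → hv j = 0 := by
      intro j hj; rw [hhv]; simp [hcase j hj, hα0 j hj]
    have hex : ∃ j, hv j ≠ 0 := by
      by_contra hcon
      push_neg at hcon
      apply hne
      funext j
      have := hcon j
      rw [hhv] at this
      linarith [sub_eq_zero.mp this]
    obtain ⟨j0, hj0⟩ := hex
    have hj0J : j0 ∈ J := by
      by_contra hjn
      exact hj0 (hhv0 j0 hjn)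
    have hpos : 0 < l2sq tv := by
      rcases lt_or_eq_of_le htv_nonneg with h | h
      · exact h
      · exfalso
        have htz : ∀ i, tv i = 0 := myl2sq_zero h.symm
        -- tv = colsub J *v (hv restricted)
        have htvJ : tv = (colsub D J).mulVec (fun b : J => hv b.1) := by
          funext i
          show ∑ j, D i j * hv j = ∑ b : J, D i b.1 * hv b.1
          rw [show (∑ b : J, D i b.1 * hv b.1) = ∑ b ∈ J.attach, D i b.1 * hv b.1 from rfl,
            Finset.sum_attach J (fun j => D i j * hv j)]
          symm
          apply Finset.sum_subset (Finset.subset_univ J)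
          intro j _ hj
          rw [hhv0 j hj, mul_zero]
        have hgram0 : (gram D J).mulVec (fun b : J => hv b.1) = 0 := by
          funext c
          have := hswap (fun j => hv j) hhv0 c
          rw [← this, ← htvJ]
          simp only [htz, mul_zero, Finset.sum_const_zero, Pi.zero_apply]
        have : (fun b : J => hv b.1) = 0 := by
          have e3 : (fun b : J => hv b.1)
              = (theta D J * gram D J).mulVec (fun b : J => hv b.1) := by
            rw [hTG, Matrix.one_mulVec]
          rw [e3, ← Matrix.mulVec_mulVec, hgram0, Matrix.mulVec_zero]
        have := congrFun this ⟨j0, hj0J⟩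
        exact hj0 this
    rw [key]
    linarith
  · push_neg at hcase
    obtain ⟨j0, hj0, ha0⟩ := hcase
    have hstrict : 0 < ∑ j, (lam * |a j| - lam * |α j| - g j * hv j) := by
      apply Finset.sum_pos' (fun j _ => hterm j)
      refine ⟨j0, Finset.mem_univ j0, ?_⟩
      have h0 : α j0 = 0 := hα0 j0 hj0
      have hhvj : hv j0 = a j0 := by rw [hhv]; simp [h0]
      have hb := hgJc j0 hj0
      have h1 : g j0 * a j0 ≤ (LV + lam * OV) * |a j0| := by
        calc g j0 * a j0 ≤ |g j0 * a j0| := le_abs_self _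
          _ = |g j0| * |a j0| := abs_mul _ _
          _ ≤ (LV + lam * OV) * |a j0| := mul_le_mul_of_nonneg_right hb (abs_nonneg _)
      have h2 : (LV + lam * OV) * |a j0| < lam * |a j0| :=
        mul_lt_mul_of_pos_right hirr (abs_pos.mpr ha0)
      rw [h0, hhvj]
      simp only [abs_zero, mul_zero, sub_zero]
      linarith
    rw [key]
    linarith
end
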